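/- Let α ∈ ℝ, α ≠ 0, and let N be a real n×n matrix with N² = 0 such that Id + (1/(4α²))NᵗN is invertible. Define N' = (Id − (1/(2α))N)(Id + (1/(4α²))NᵗN)^{−1}Nᵗ(Id + (1/(2α))N) and s_{α,N}(λ) = (Id + (λ+α)^{−1}N')(Id + (λ−α)^{−1}N). Then for every λ ∈ ℂ ∖ {α, −α}: (i) conj(s_{α,N}(conj λ)) = s_{α,N}(λ) (the GL(n,ℝ)-reality condition), and (ii) s_{α,N}(−λ)ᵗ · s_{α,N}(λ) = Id (the GL(n)/O(n)-twisting condition σ(s(−λ)) = s(λ) for σ(A) = (Aᵗ)^{−1}). -/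

import Mathlib

set_option synthInstance.maxHeartbeats 1000000
set_option maxHeartbeats 1000000

open scoped Matrix ComplexConjugate

section helpers
variable {n : ℕ}

private lemma mapR_mul (A B : Matrix (Fin n) (Fin n) ℝ) :
    (A * B).map Complex.ofReal = A.map Complex.ofReal * B.map Complex.ofReal := by
  ext i j
  simp [Matrix.map_apply, Matrix.mul_apply]

private lemma mapR_add (A B : Matrix (Fin n) (Fin n) ℝ) :
    (A + B).map Complex.ofReal = A.map Complex.ofReal + B.map Complex.ofReal := by
  ext i j; simp [Matrix.map_apply]

private lemma mapR_sub (A B : Matrix (Fin n) (Fin n) ℝ) :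
    (A - B).map Complex.ofReal = A.map Complex.ofReal - B.map Complex.ofReal := by
  ext i j; simp [Matrix.map_apply]

private lemma mapR_smul (r : ℝ) (A : Matrix (Fin n) (Fin n) ℝ) :
    ((r • A).map Complex.ofReal) = ((r : ℂ)) • A.map Complex.ofReal := by
  ext i j; simp [Matrix.map_apply]

private lemma mapR_zero : ((0 : Matrix (Fin n) (Fin n) ℝ)).map Complex.ofReal = 0 := by
  ext i j; simp [Matrix.map_apply]

private lemma mapR_transpose (A : Matrix (Fin n) (Fin n) ℝ) :
    (Aᵀ).map Complex.ofReal = (A.map Complex.ofReal)ᵀ := rfl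

end helpers


lemma s_aux_key (n : ℕ) (α : ℝ) (hα : α ≠ 0)
    (N : Matrix (Fin n) (Fin n) ℝ) (hN : N * N = 0)
    (hinv : IsUnit ((1 : Matrix (Fin n) (Fin n) ℝ) + (1 / (4 * α ^ 2)) • (Nᵀ * N)))
    (N' : Matrix (Fin n) (Fin n) ℝ)
    (hN' : N' = (1 - (1 / (2 * α)) • N) * (1 + (1 / (4 * α ^ 2)) • (Nᵀ * N))⁻¹ * Nᵀ *
      (1 + (1 / (2 * α)) • N)) :
    N' - N'ᵀ = Nᵀ - N ∧ (2*α) • N'ᵀ + N'ᵀ * N' = (2*α) • N + Nᵀ * N := by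
  set G : Matrix (Fin n) (Fin n) ℝ := 1 + (1 / (4 * α ^ 2)) • (Nᵀ * N) with hG
  set M : Matrix (Fin n) (Fin n) ℝ := G⁻¹ with hM
  have hdet : IsUnit G.det := (Matrix.isUnit_iff_isUnit_det _).1 hinv
  have hMG : M * G = 1 := Matrix.nonsing_inv_mul G hdet
  have hGM : G * M = 1 := Matrix.mul_nonsing_inv G hdet
  have hTT : Nᵀ * Nᵀ = 0 := by
    rw [← Matrix.transpose_mul, hN, Matrix.transpose_zero]
  have hGN : G * N = N := by
    rw [hG, add_mul, one_mul, Matrix.smul_mul, mul_assoc, hN, mul_zero, smul_zero, add_zero]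
  have hTG : Nᵀ * G = Nᵀ := by
    rw [hG, mul_add, mul_one, Matrix.mul_smul, ← mul_assoc, hTT, zero_mul, smul_zero, add_zero]
  have hMN : M * N = N := by
    conv_lhs => rw [← hGN, ← mul_assoc, hMG, one_mul]
  have hTM : Nᵀ * M = Nᵀ := by
    conv_lhs => rw [← hTG, mul_assoc, hGM, mul_one]
  have hGsym : Gᵀ = G := by
    rw [hG]
    simp [Matrix.transpose_add, Matrix.transpose_smul, Matrix.transpose_mul,
      Matrix.transpose_transpose]
  have hMsym : Mᵀ = M := by
    rw [hM, Matrix.transpose_nonsing_inv, hGsym]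
  have h4 : (4 * α ^ 2) * (1 / (4 * α ^ 2)) = 1 := by
    field_simp
  have hMTN : M * (Nᵀ * N) = (4 * α ^ 2) • (1 - M) := by
    have h1 : M * G = 1 := hMG
    rw [hG, mul_add, mul_one, Matrix.mul_smul] at h1
    have h2 : (1 / (4 * α ^ 2)) • (M * (Nᵀ * N)) = 1 - M := by
      rw [← h1]; abel
    calc M * (Nᵀ * N) = (4 * α ^ 2) • ((1 / (4 * α ^ 2)) • (M * (Nᵀ * N))) := by
          rw [smul_smul, h4, one_smul]
      _ = (4 * α ^ 2) • (1 - M) := by rw [h2]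
  have hTNM : (Nᵀ * N) * M = (4 * α ^ 2) • (1 - M) := by
    have h1 : G * M = 1 := hGM
    rw [hG, add_mul, one_mul, Matrix.smul_mul] at h1
    have h2 : (1 / (4 * α ^ 2)) • ((Nᵀ * N) * M) = 1 - M := by
      rw [← h1]; abel
    calc (Nᵀ * N) * M = (4 * α ^ 2) • ((1 / (4 * α ^ 2)) • ((Nᵀ * N) * M)) := by
          rw [smul_smul, h4, one_smul]
      _ = (4 * α ^ 2) • (1 - M) := by rw [h2]
  -- canonical form for N'
  have hF1 : N' = M * Nᵀ + (2*α) • (1 : Matrix (Fin n) (Fin n) ℝ) - (2*α) • M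
      - (1/(2*α)) • (N * (M * Nᵀ)) - N + N * M := by
    rw [hN']
    have expand : (1 - (1 / (2 * α)) • N) * M * Nᵀ * (1 + (1 / (2 * α)) • N)
        = M * Nᵀ + (1/(2*α)) • (M * (Nᵀ * N)) - (1/(2*α)) • (N * (M * Nᵀ))
          - ((1/(2*α)) * (1/(2*α))) • (N * (M * (Nᵀ * N))) := by
      simp only [sub_mul, add_mul, mul_add, mul_one, one_mul, Matrix.smul_mul,
        Matrix.mul_smul, mul_assoc, smul_smul]
      abel
    have hc : (1/(2*α)) * (1/(2*α)) = 1 / (4*α^2) := by ring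
    have hNM1 : N * ((4 * α ^ 2) • ((1:Matrix (Fin n) (Fin n) ℝ) - M))
        = (4*α^2) • (N - N * M) := by
      rw [Matrix.mul_smul, mul_sub, mul_one]
    rw [expand, hc, hMTN, hNM1, smul_smul, smul_smul]
    have e1 : (1/(2*α)) * (4*α^2) = 2*α := by field_simp; ring
    have e2 : (1 / (4*α^2)) * (4*α^2) = 1 := by field_simp
    rw [e1, e2, one_smul, smul_sub]
    abel
  have hF1T : N'ᵀ = N * M + (2*α) • (1 : Matrix (Fin n) (Fin n) ℝ) - (2*α) • M
      - (1/(2*α)) • (N * (M * Nᵀ)) - Nᵀ + M * Nᵀ := by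
    rw [hF1]
    simp only [Matrix.transpose_add, Matrix.transpose_sub, Matrix.transpose_smul,
      Matrix.transpose_mul, Matrix.transpose_one, Matrix.transpose_transpose, hMsym]
    rw [← mul_assoc]
    try abel
  have rNN : ∀ X : Matrix (Fin n) (Fin n) ℝ, N * (N * X) = 0 := by
    intro X; rw [← mul_assoc, hN, zero_mul]
  have rTT : ∀ X : Matrix (Fin n) (Fin n) ℝ, Nᵀ * (Nᵀ * X) = 0 := by
    intro X; rw [← mul_assoc, hTT, zero_mul]
  have rMN : ∀ X : Matrix (Fin n) (Fin n) ℝ, M * (N * X) = N * X := by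
    intro X; rw [← mul_assoc, hMN]
  have rTM : ∀ X : Matrix (Fin n) (Fin n) ℝ, Nᵀ * (M * X) = Nᵀ * X := by
    intro X; rw [← mul_assoc, hTM]
  have rMTN : ∀ X : Matrix (Fin n) (Fin n) ℝ, M * (Nᵀ * (N * X)) = (4*α^2) • (X - M * X) := by
    intro X
    have h : M * (Nᵀ * (N * X)) = (M * (Nᵀ * N)) * X := by rw [mul_assoc, mul_assoc]
    rw [h, hMTN, Matrix.smul_mul, sub_mul, one_mul]
  have rTNM : ∀ X : Matrix (Fin n) (Fin n) ℝ, Nᵀ * (N * (M * X)) = (4*α^2) • (X - M * X) := by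
    intro X
    have h : Nᵀ * (N * (M * X)) = (Nᵀ * N * M) * X := by rw [mul_assoc, mul_assoc]
    rw [h, hTNM, Matrix.smul_mul, sub_mul, one_mul]
  have hTNM2 : Nᵀ * (N * M) = (4*α^2) • ((1 : Matrix (Fin n) (Fin n) ℝ) - M) := by
    rw [← mul_assoc]; exact hTNM
  constructor
  · rw [hF1T, hF1]; abel
  · rw [hF1T, hF1]
    simp only [mul_add, add_mul, mul_sub, sub_mul, Matrix.smul_mul, Matrix.mul_smul,
      mul_assoc, mul_one, one_mul, smul_smul, smul_sub, smul_add, rNN, rTT, rMN, rTM,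
      rMTN, rTNM, hN, hTT, hMN, hTM, hMTN, hTNM, hTNM2, mul_zero, zero_mul, smul_zero,
      add_zero, zero_add, sub_zero, zero_sub]
    match_scalars <;> field_simp <;> ring

/-- **The twisted simple elements `s_{α,N}` (Corollary 5.5).**
For `α ∈ ℝ ∖ {0}` and a real matrix `N` with `N² = 0` such that
`Id + (1/(4α²)) Nᵗ N` is invertible, put
`N' = (Id - (1/(2α)) N)(Id + (1/(4α²)) Nᵗ N)⁻¹ Nᵗ (Id + (1/(2α)) N)` and
`s_{α,N}(λ) = (Id + (λ+α)⁻¹ N')(Id + (λ-α)⁻¹ N) = m_{-α,1,N'} m_{α,1,N}`.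
Then `s_{α,N}` satisfies the `GL(n,ℝ)`-reality condition `conj(s(λ̄)) = s(λ)` and the
`GL(n)/O(n)`-twisting condition `s(-λ)ᵗ s(λ) = Id`. -/
theorem s_alpha_N_real_and_twisted (n : ℕ) (α : ℝ) (hα : α ≠ 0)
    (N : Matrix (Fin n) (Fin n) ℝ) (hN : N * N = 0)
    (hinv : IsUnit ((1 : Matrix (Fin n) (Fin n) ℝ) + (1 / (4 * α ^ 2)) • (Nᵀ * N)))
    (N' : Matrix (Fin n) (Fin n) ℝ)
    (hN' : N' = (1 - (1 / (2 * α)) • N) * (1 + (1 / (4 * α ^ 2)) • (Nᵀ * N))⁻¹ * Nᵀ *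
      (1 + (1 / (2 * α)) • N))
    (s : ℂ → Matrix (Fin n) (Fin n) ℂ)
    (hs : ∀ l : ℂ, s l = (1 + (l + (α : ℂ))⁻¹ • N'.map (Complex.ofReal)) *
      (1 + (l - (α : ℂ))⁻¹ • N.map (Complex.ofReal))) :
    ∀ l : ℂ, l ≠ (α : ℂ) → l ≠ -(α : ℂ) →
      ((s (conj l)).map (starRingEnd ℂ) = s l) ∧ (s (-l))ᵀ * s l = 1 := by
  obtain ⟨hE1, hE2⟩ := s_aux_key n α hα N hN hinv N' hN'
  intro l hl1 hl2
  have h1 : l - (α : ℂ) ≠ 0 := sub_ne_zero.2 hl1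
  have h2 : l + (α : ℂ) ≠ 0 := fun h => hl2 (eq_neg_of_add_eq_zero_left h)
  set A : Matrix (Fin n) (Fin n) ℂ := N.map Complex.ofReal with hA
  set A' : Matrix (Fin n) (Fin n) ℂ := N'.map Complex.ofReal with hA'
  have hAA : A * A = 0 := by rw [hA, ← mapR_mul, hN, mapR_zero]
  have hATAT : Aᵀ * Aᵀ = 0 := by
    rw [← Matrix.transpose_mul, hAA, Matrix.transpose_zero]
  have hE1c : A' - A'ᵀ = Aᵀ - A := by
    rw [hA, hA', ← mapR_transpose, ← mapR_transpose, ← mapR_sub, ← mapR_sub, hE1]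
  have hE2c : ((2*α : ℝ) : ℂ) • A'ᵀ + A'ᵀ * A' = ((2*α : ℝ) : ℂ) • A + Aᵀ * A := by
    rw [hA, hA', ← mapR_transpose, ← mapR_transpose, ← mapR_smul, ← mapR_smul,
      ← mapR_mul, ← mapR_mul, ← mapR_add, ← mapR_add, hE2]
  constructor
  · -- reality condition
    rw [hs ((starRingEnd ℂ) l), hs l]
    have key : ∀ (x : ℂ) (C : Matrix (Fin n) (Fin n) ℝ),
        ((1 + x • C.map Complex.ofReal).map (starRingEnd ℂ))
          = 1 + (conj x) • C.map Complex.ofReal := by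
      intro x C
      ext i j
      simp [Matrix.map_apply, Matrix.one_apply, apply_ite (starRingEnd ℂ),
        Complex.conj_ofReal]
    rw [Matrix.map_mul, key, key]
    have c1 : conj (((starRingEnd ℂ) l + (α : ℂ))⁻¹) = (l + (α : ℂ))⁻¹ := by
      rw [map_inv₀, map_add, Complex.conj_conj, Complex.conj_ofReal]
    have c2 : conj (((starRingEnd ℂ) l - (α : ℂ))⁻¹) = (l - (α : ℂ))⁻¹ := by
      rw [map_inv₀, map_sub, Complex.conj_conj, Complex.conj_ofReal]
    rw [c1, c2]
  · -- twisting condition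
    rw [hs l, hs (-l)]
    set a : ℂ := (l + (α : ℂ))⁻¹ with ha
    set b : ℂ := (l - (α : ℂ))⁻¹ with hb
    have e1 : (-l + (α : ℂ))⁻¹ = -b := by
      rw [show -l + (α : ℂ) = -(l - (α:ℂ)) by ring, inv_neg, hb]
    have e2 : (-l - (α : ℂ))⁻¹ = -a := by
      rw [show -l - (α : ℂ) = -(l + (α:ℂ)) by ring, inv_neg, ha]
    rw [e1, e2]
    have claim1 : (1 - b • A'ᵀ) * (1 + a • A') = (1 + a • Aᵀ) * (1 - b • A) := by
      have hQ : A'ᵀ * A' = ((2*α : ℝ) : ℂ) • A + Aᵀ * A - ((2*α : ℝ) : ℂ) • A'ᵀ := by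
        rw [← hE2c]; abel
      have hPT : A'ᵀ = A' - (Aᵀ - A) := by rw [← hE1c]; abel
      simp only [mul_add, add_mul, sub_mul, mul_sub, mul_one, one_mul,
        Matrix.smul_mul, Matrix.mul_smul, smul_smul]
      rw [hQ, hPT]
      rw [ha, hb]; match_scalars <;> field_simp [ha, hb] <;> ring
    have hXA : (1 - a • Aᵀ) * (1 + a • Aᵀ) = 1 := by
      simp only [mul_add, sub_mul, mul_one, one_mul, Matrix.smul_mul, Matrix.mul_smul,
        smul_smul]
      rw [hATAT]
      simp
    have hYA : (1 - b • A) * (1 + b • A) = 1 := by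
      simp only [mul_add, sub_mul, mul_one, one_mul, Matrix.smul_mul, Matrix.mul_smul,
        smul_smul]
      rw [hAA]
      simp
    have hT : ((1 + -b • A') * (1 + -a • A))ᵀ = (1 - a • Aᵀ) * (1 - b • A'ᵀ) := by
      rw [Matrix.transpose_mul]
      congr 1 <;>
      · simp [Matrix.transpose_add, Matrix.transpose_smul, sub_eq_add_neg]
    rw [hT]
    calc (1 - a • Aᵀ) * (1 - b • A'ᵀ) * ((1 + a • A') * (1 + b • A))
        = (1 - a • Aᵀ) * (((1 - b • A'ᵀ) * (1 + a • A')) * (1 + b • A)) := by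
          rw [mul_assoc, mul_assoc]
      _ = (1 - a • Aᵀ) * (((1 + a • Aᵀ) * (1 - b • A)) * (1 + b • A)) := by rw [claim1]
      _ = ((1 - a • Aᵀ) * (1 + a • Aᵀ)) * ((1 - b • A) * (1 + b • A)) := by
          rw [mul_assoc, mul_assoc]
      _ = 1 := by rw [hXA, hYA, one_mul]
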